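/- If u is a vertex of a connected graph G of order at least 2 that is not a twin vertex, then V(G) ∖ {u} is a fault-tolerant resolving set of G. -/

import Mathlib

open SimpleGraph

variable {V : Type*}

/-- `S` is a resolving set of `G`. -/
def ResSet (G : SimpleGraph V) (S : Set V) : Prop :=
  ∀ x y : V, x ≠ y → ∃ w ∈ S, G.dist x w ≠ G.dist y w

/-- `S` is a fault-tolerant resolving set of `G`. -/
def FTResSet (G : SimpleGraph V) (S : Set V) : Prop :=
  ResSet G S ∧ ∀ x ∈ S, ResSet G (S \ {x})

/-- Metric dimension. -/
noncomputable def md (G : SimpleGraph V) : ℕ :=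
  sInf {n | ∃ S : Set V, S.ncard = n ∧ ResSet G S}

/-- Fault-tolerant metric dimension. -/
noncomputable def ftmd (G : SimpleGraph V) : ℕ :=
  sInf {n | ∃ S : Set V, S.ncard = n ∧ FTResSet G S}

/-- `u` and `v` are twins: distinct and with equal open or equal closed neighborhoods. -/
def IsTwinPair (G : SimpleGraph V) (u v : V) : Prop :=
  u ≠ v ∧ (G.neighborSet u = G.neighborSet v ∨
    G.neighborSet u ∪ {u} = G.neighborSet v ∪ {v})

/-- `u` is a twin vertex. -/
def IsTwin (G : SimpleGraph V) (u : V) : Prop := ∃ v, IsTwinPair G u v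

lemma not_twin_exists (G : SimpleGraph V) (hG : G.Connected) (u v : V) (huv : u ≠ v)
    (hnt : ¬ IsTwinPair G u v) : ∃ w, w ≠ u ∧ w ≠ v ∧ G.dist u w ≠ G.dist v w := by
  by_contra hcon
  push_neg at hcon
  have h : ∀ w, w ≠ u → w ≠ v → G.dist u w = G.dist v w := hcon
  apply hnt
  refine ⟨huv, ?_⟩
  have hd : 0 < G.dist u v := hG.pos_dist_of_ne huv
  rcases lt_or_ge (G.dist u v) 3 with hlt | hge
  · have hcase : G.dist u v = 1 ∨ G.dist u v = 2 := by omega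
    rcases hcase with hdu | hdu
    · -- adjacent: closed twins
      right
      have hadj : G.Adj u v := SimpleGraph.dist_eq_one_iff_adj.mp hdu
      ext w
      simp only [Set.mem_union, SimpleGraph.mem_neighborSet, Set.mem_singleton_iff]
      constructor
      · rintro (haw | rfl)
        · by_cases hwv : w = v
          · right; exact hwv
          · left
            by_cases hwu : w = u
            · exact absurd (hwu ▸ haw) (G.irrefl)
            · have : G.dist v w = 1 := by
                rw [← h w hwu hwv]; exact SimpleGraph.dist_eq_one_iff_adj.mpr haw
              exact SimpleGraph.dist_eq_one_iff_adj.mp this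
        · left; exact hadj.symm
      · rintro (haw | rfl)
        · by_cases hwu : w = u
          · right; exact hwu
          · left
            by_cases hwv : w = v
            · exact absurd (hwv ▸ haw) (G.irrefl)
            · have : G.dist u w = 1 := by
                rw [h w hwu hwv]; exact SimpleGraph.dist_eq_one_iff_adj.mpr haw
              exact SimpleGraph.dist_eq_one_iff_adj.mp this
        · left; exact hadj
    · -- distance 2: open twins
      left
      have hnadj : ¬ G.Adj u v := by
        intro hadj
        have := SimpleGraph.dist_eq_one_iff_adj.mpr hadj
        omega
      ext w
      simp only [SimpleGraph.mem_neighborSet]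
      constructor
      · intro haw
        have hwu : w ≠ u := fun e => G.irrefl (e ▸ haw)
        have hwv : w ≠ v := by rintro rfl; exact hnadj haw
        have : G.dist v w = 1 := by
          rw [← h w hwu hwv]; exact SimpleGraph.dist_eq_one_iff_adj.mpr haw
        exact SimpleGraph.dist_eq_one_iff_adj.mp this
      · intro haw
        have hwv : w ≠ v := fun e => G.irrefl (e ▸ haw)
        have hwu : w ≠ u := by rintro rfl; exact hnadj haw.symm
        have : G.dist u w = 1 := by
          rw [h w hwu hwv]; exact SimpleGraph.dist_eq_one_iff_adj.mpr haw
        exact SimpleGraph.dist_eq_one_iff_adj.mp this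
  · -- distance ≥ 3 : contradiction
    exfalso
    obtain ⟨p, hp⟩ := hG.exists_walk_length_eq_dist u v
    cases p with
    | nil => simp at hge
    | cons hadj q =>
      rename_i w
      have hq : q.length = G.dist u v - 1 := by
        simp [SimpleGraph.Walk.length_cons] at hp; omega
      have hle : G.dist w v ≤ G.dist u v - 1 := hq ▸ G.dist_le q
      have htri : G.dist u v ≤ G.dist u w + G.dist w v := hG.dist_triangle
      have huw : G.dist u w = 1 := SimpleGraph.dist_eq_one_iff_adj.mpr hadj
      have hwu : w ≠ u := fun e => G.irrefl (e ▸ hadj)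
      have hwv : w ≠ v := by
        rintro rfl; omega
      have := h w hwu hwv
      rw [huw] at this
      rw [SimpleGraph.dist_comm (u := v) (v := w)] at this
      omega

lemma resolve_aux [Fintype V] (G : SimpleGraph V) (hG : G.Connected)
    (u : V) (hu : ¬ IsTwin G u) (s : V) : ResSet G ({u}ᶜ \ {s}) := by
  intro x y hxy
  by_cases hx : x ≠ u ∧ x ≠ s
  · exact ⟨x, ⟨hx.1, hx.2⟩, by
      rw [SimpleGraph.dist_self]
      exact (hG.pos_dist_of_ne (Ne.symm hxy)).ne⟩
  · by_cases hy : y ≠ u ∧ y ≠ s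
    · exact ⟨y, ⟨hy.1, hy.2⟩, by
        rw [SimpleGraph.dist_self (G := G) (v := y)]
        exact (hG.pos_dist_of_ne hxy).ne'⟩
    · -- both x and y in {u, s}
      push_neg at hx hy
      -- one of x, y is u; say cases
      have hxs : x = u ∨ x = s := by
        by_cases h1 : x = u
        · exact Or.inl h1
        · exact Or.inr (hx h1)
      have hys : y = u ∨ y = s := by
        by_cases h1 : y = u
        · exact Or.inl h1
        · exact Or.inr (hy h1)
      rcases hxs with rfl | rfl
      · rcases hys with rfl | rfl
        · exact absurd rfl hxy
        · obtain ⟨w, hw1, hw2, hw3⟩ := not_twin_exists G hG x y hxy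
            (fun htw => hu ⟨y, htw⟩)
          exact ⟨w, ⟨hw1, hw2⟩, hw3⟩
      · rcases hys with rfl | rfl
        · obtain ⟨w, hw1, hw2, hw3⟩ := not_twin_exists G hG y x (Ne.symm hxy)
            (fun htw => hu ⟨x, htw⟩)
          exact ⟨w, ⟨hw1, hw2⟩, Ne.symm hw3⟩
        · exact absurd rfl hxy

theorem compl_nontwin_ft_resolving [Fintype V] (G : SimpleGraph V) (hG : G.Connected)
    (hn : 2 ≤ Fintype.card V) (u : V) (hu : ¬ IsTwin G u) :
    FTResSet G ({u}ᶜ : Set V) := by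
  constructor
  · intro x y hxy
    obtain ⟨w, hw, h3⟩ := resolve_aux G hG u hu u x y hxy
    exact ⟨w, hw.1, h3⟩
  · intro s _
    have := resolve_aux G hG u hu s
    intro x y hxy
    obtain ⟨w, hw, h3⟩ := this x y hxy
    exact ⟨w, ⟨hw.1, hw.2⟩, h3⟩
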